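/- The induced operation ⋄ on the cocenter C(A) of a symmetric Frobenius algebra A is associative: ⟨(a ⋄ b) ⋄ c⟩ = ⟨a ⋄ (b ⋄ c)⟩ for all a, b, c ∈ A, where a ⋄ b = ∑_{e∈B} a e b e^∨. -/

import Mathlib

/-- The induced operation `⋄` on the cocenter of a symmetric Frobenius algebra is associative:
`⟨(a ⋄ b) ⋄ c⟩ = ⟨a ⋄ (b ⋄ c)⟩`. -/
theorem stmt8 {k A : Type*} [Field k] [Ring A] [Algebra k A]
    {ι : Type*} [Fintype ι] [DecidableEq ι]
    (B : Module.Basis ι k A)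
    (tr : A →ₗ[k] k)
    (hsym : ∀ a b : A, tr (a * b) = tr (b * a))
    (hnd : ∀ a : A, (∀ b : A, tr (a * b) = 0) → a = 0)
    (d : ι → A)
    (hd : ∀ i j, tr (d i * B j) = if i = j then 1 else 0)
    (diam : A → A → A)
    (hdiam : ∀ a b, diam a b = ∑ i, a * B i * b * d i)
    (J : Submodule k A)
    (hJ : J = Submodule.span k {x : A | ∃ y z : A, x = y * z - z * y})
    (a b c : A) :
    (Submodule.Quotient.mk (diam (diam a b) c) : A ⧸ J)
      = Submodule.Quotient.mk (diam a (diam b c)) := by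
  -- coordinate formula: `tr (d i * y)` is the `i`-th coordinate of `y` in basis `B`
  have h1 : ∀ (i : ι) (y : A), tr (d i * y) = B.repr y i := by
    intro i y
    conv_lhs => rw [← B.sum_repr y]
    rw [Finset.mul_sum, map_sum]
    simp [mul_smul_comm, hd, mul_ite]
  have h2 : ∀ y : A, y = ∑ j, tr (d j * y) • B j := by
    intro y
    simp only [h1]
    exact (B.sum_repr y).symm
  -- expansion in terms of the dual family `d`
  have h3 : ∀ y : A, y = ∑ j, tr (y * B j) • d j := by
    intro y
    have hz : ∀ bb : A, tr ((y - ∑ j, tr (y * B j) • d j) * bb) = 0 := by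
      intro bb
      rw [sub_mul, map_sub, Finset.sum_mul, map_sum]
      have e1 : ∀ j, tr ((tr (y * B j) • d j) * bb) = tr (y * B j) * B.repr bb j := by
        intro j
        rw [smul_mul_assoc, map_smul, h1]
        rfl
      have e2 : tr (y * bb) = ∑ j, B.repr bb j * tr (y * B j) := by
        conv_lhs => rw [← B.sum_repr bb]
        rw [Finset.mul_sum, map_sum]
        exact Finset.sum_congr rfl fun j _ => by rw [mul_smul_comm, map_smul]; rfl
      rw [e2]
      rw [Finset.sum_congr rfl fun j _ => e1 j]
      rw [Finset.sum_congr rfl fun j _ => mul_comm (B.repr bb j) (tr (y * B j))]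
      ring
    have := hnd _ hz
    exact sub_eq_zero.mp this
  -- the Casimir identity
  have key : ∀ x p : A, ∑ j, x * B j * p * d j = ∑ j, B j * p * (d j * x) := by
    intro x p
    calc ∑ j, x * B j * p * d j
        = ∑ j, ∑ m, tr (d m * (x * B j)) • (B m * p * d j) := by
          refine Finset.sum_congr rfl fun j _ => ?_
          conv_lhs => rw [h2 (x * B j)]
          rw [Finset.sum_mul, Finset.sum_mul]
          exact Finset.sum_congr rfl fun m _ => by rw [smul_mul_assoc, smul_mul_assoc]
      _ = ∑ m, ∑ j, tr (d m * (x * B j)) • (B m * p * d j) := Finset.sum_comm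
      _ = ∑ j, ∑ m, tr (d j * (x * B m)) • (B j * p * d m) := rfl
      _ = ∑ j, ∑ m, tr ((d j * x) * B m) • (B j * p * d m) := by
          refine Finset.sum_congr rfl fun j _ => Finset.sum_congr rfl fun m _ => by
            rw [← mul_assoc (d j) x (B m)]
      _ = ∑ j, B j * p * (d j * x) := by
          refine Finset.sum_congr rfl fun j _ => ?_
          conv_rhs => rw [h3 (d j * x)]
          rw [Finset.mul_sum]
          exact Finset.sum_congr rfl fun m _ => by rw [mul_smul_comm]
  -- associativity holds in `A` itself
  congr 1
  rw [hdiam (diam a b) c, hdiam a b, hdiam a (diam b c), hdiam b c]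
  rw [Finset.sum_congr rfl fun j (_ : j ∈ Finset.univ) =>
    (by rw [Finset.sum_mul, Finset.sum_mul, Finset.sum_mul] :
      (∑ i, a * B i * b * d i) * B j * c * d j = ∑ i, a * B i * b * d i * B j * c * d j)]
  rw [Finset.sum_comm]
  refine Finset.sum_congr rfl fun i _ => ?_
  have hk := key (d i) c
  calc ∑ j, a * B i * b * d i * B j * c * d j
      = a * B i * b * ∑ j, d i * B j * c * d j := by
        rw [Finset.mul_sum]
        exact Finset.sum_congr rfl fun j _ => by simp [mul_assoc]
    _ = a * B i * b * ∑ j, B j * c * (d j * d i) := by rw [hk]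
    _ = a * B i * (∑ j, b * B j * c * d j) * d i := by
        rw [Finset.mul_sum, Finset.mul_sum, Finset.sum_mul]
        exact Finset.sum_congr rfl fun j _ => by simp [mul_assoc]
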